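/- Let x_1, …, x_p be a basis of ℝ^p and define w_i(β) = exp(⟨x_i,β⟩)/(1+exp(⟨x_i,β⟩))^2. Then there exists a constant c > 0 such that for all r > 0, sup over unit vectors u of ∏_{i=1}^p w_i(r u) ≤ exp(−c r); in particular this supremum tends to 0 as r → ∞. -/

import Mathlib

theorem stmt_3 (p : ℕ) (hp : 1 ≤ p)
    (x : Fin p → EuclideanSpace ℝ (Fin p))
    (hx : LinearIndependent ℝ x)
    (w : ℝ → ℝ) (hw : ∀ z, w z = Real.exp z / (1 + Real.exp z) ^ 2) :
    ∃ c > (0 : ℝ),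
      (∀ r > (0 : ℝ), ∀ u : EuclideanSpace ℝ (Fin p), ‖u‖ = 1 →
        ∏ i, w (inner ℝ (x i) (r • u) : ℝ) ≤ Real.exp (-c * r)) ∧
      Filter.Tendsto
        (fun r : ℝ => ⨆ u : {u : EuclideanSpace ℝ (Fin p) // ‖u‖ = 1},
          ∏ i, w (inner ℝ (x i) (r • (u : EuclideanSpace ℝ (Fin p))) : ℝ))
        Filter.atTop (nhds 0) := by
  haveI : Nonempty (Fin p) := ⟨⟨0, hp⟩⟩
  -- w is nonnegative and bounded by exp(-|z|)
  have hw0 : ∀ z, 0 ≤ w z := by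
    intro z; rw [hw]; positivity
  have hwle : ∀ z, w z ≤ Real.exp (-|z|) := by
    intro z; rw [hw, div_le_iff₀ (by positivity)]
    rcases le_or_gt 0 z with h | h
    · rw [abs_of_nonneg h]
      have h1 : Real.exp (-z) * Real.exp z = 1 := by
        rw [← Real.exp_add]; simp
      nlinarith [Real.exp_pos z, Real.exp_pos (-z)]
    · rw [abs_of_neg h, neg_neg]
      nlinarith [Real.exp_pos z, mul_pos (Real.exp_pos z) (Real.exp_pos z),
        mul_pos (mul_pos (Real.exp_pos z) (Real.exp_pos z)) (Real.exp_pos z)]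
  -- the function f u = ∑ |⟨x i, u⟩|
  set f : EuclideanSpace ℝ (Fin p) → ℝ := fun u => ∑ i, |(inner ℝ (x i) u : ℝ)| with hf
  have hcont : Continuous f := by
    apply continuous_finset_sum; intro i _
    exact (continuous_const.inner continuous_id).abs
  have hsph : IsCompact (Metric.sphere (0 : EuclideanSpace ℝ (Fin p)) 1) :=
    isCompact_sphere _ _
  have hne : (Metric.sphere (0 : EuclideanSpace ℝ (Fin p)) 1).Nonempty :=
    NormedSpace.sphere_nonempty.mpr zero_le_one
  obtain ⟨u0, hu0, hmin⟩ := hsph.exists_isMinOn hne hcont.continuousOn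
  set c := f u0 with hc
  have hspan : Submodule.span ℝ (Set.range x) = ⊤ :=
    hx.span_eq_top_of_card_eq_finrank (by simp)
  have hcpos : 0 < c := by
    rcases lt_or_eq_of_le (Finset.sum_nonneg (fun i _ => abs_nonneg _) : 0 ≤ c) with h | h
    · exact h
    · exfalso
      have hzero : ∀ i, (inner ℝ (x i) u0 : ℝ) = 0 := by
        intro i
        have := (Finset.sum_eq_zero_iff_of_nonneg
          (fun i _ => abs_nonneg ((inner ℝ (x i) u0 : ℝ)))).mp h.symm i (Finset.mem_univ i)
        exact abs_eq_zero.mp this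
      have hu0' : u0 = 0 := by
        have : ∀ v : EuclideanSpace ℝ (Fin p), (inner ℝ v u0 : ℝ) = 0 := by
          intro v
          have hv : v ∈ Submodule.span ℝ (Set.range x) := hspan ▸ Submodule.mem_top
          induction hv using Submodule.span_induction with
          | mem v hv => obtain ⟨i, rfl⟩ := hv; exact hzero i
          | zero => simp
          | add a b _ _ ha hb => rw [inner_add_left, ha, hb]; ring
          | smul t a _ ha => rw [real_inner_smul_left, ha]; ring
        have := this u0
        exact inner_self_eq_zero.mp this
      have : ‖u0‖ = 1 := mem_sphere_zero_iff_norm.mp hu0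
      rw [hu0'] at this; simp at this
  have key : ∀ r > (0 : ℝ), ∀ u : EuclideanSpace ℝ (Fin p), ‖u‖ = 1 →
      ∏ i, w (inner ℝ (x i) (r • u) : ℝ) ≤ Real.exp (-c * r) := by
    intro r hr u hu
    calc ∏ i, w (inner ℝ (x i) (r • u) : ℝ)
        ≤ ∏ i, Real.exp (-|(inner ℝ (x i) (r • u) : ℝ)|) :=
          Finset.prod_le_prod (fun i _ => hw0 _) (fun i _ => hwle _)
      _ = Real.exp (∑ i, -|(inner ℝ (x i) (r • u) : ℝ)|) := (Real.exp_sum _ _).symm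
      _ ≤ Real.exp (-c * r) := by
          apply Real.exp_le_exp.mpr
          have hfu : c ≤ f u := hmin (mem_sphere_zero_iff_norm.mpr hu)
          have : ∑ i, -|(inner ℝ (x i) (r • u) : ℝ)| = -(r * f u) := by
            rw [hf]
            simp only [real_inner_smul_right, abs_mul, abs_of_pos hr,
              ← Finset.sum_neg_distrib, Finset.mul_sum]
          rw [this]
          nlinarith
  refine ⟨c, hcpos, key, ?_⟩
  haveI : Nonempty {u : EuclideanSpace ℝ (Fin p) // ‖u‖ = 1} := by
    obtain ⟨u, hu⟩ := hne
    exact ⟨⟨u, mem_sphere_zero_iff_norm.mp hu⟩⟩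
  apply squeeze_zero' (g := fun r => Real.exp (-c * r))
  · filter_upwards with r
    exact Real.iSup_nonneg fun u => Finset.prod_nonneg fun i _ => hw0 _
  · filter_upwards [Filter.eventually_gt_atTop 0] with r hr
    exact ciSup_le fun u => key r hr u u.2
  · have h1 : Filter.Tendsto (fun r : ℝ => -c * r) Filter.atTop Filter.atBot :=
      Filter.Tendsto.const_mul_atTop_of_neg (by linarith) Filter.tendsto_id
    exact Real.tendsto_exp_atBot.comp h1
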